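/- arXiv:1801.04809 — 2 statements merged into one kernel-verified Lean document; each statement's English description precedes it below -/
import Mathlib

section
/- Let R and S be Dyck paths of the same length 2n, both avoiding three consecutive north steps NNN. Then Type(R) = Type(S) if and only if cls(φ(R)) = cls(φ(S)). -/
/-- Steps: north `N = (0,1)`, east `E = (1,0)`, diagonal `D = (1,1)`. -/
inductive MStep : Type
  | N | E | D
  deriving DecidableEq

/-- The contribution of a step to the height `y - x` above the diagonal. -/
def MStep.hdiff : MStep → ℤ
  | .N => 1
  | .E => -1
  | .D => 0

/-- The total height change `y - x` along a word of steps. -/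
def wsum (p : List MStep) : ℤ := (p.map MStep.hdiff).sum

/-- A (nonempty) Motzkin path: starts at the origin, never goes below the
diagonal `y = x`, and ends on the diagonal. -/
def IsMotzkin (p : List MStep) : Prop :=
  p ≠ [] ∧ (∀ q, q <+: p → 0 ≤ wsum q) ∧ wsum p = 0

/-- A Dyck path is a Motzkin path with no diagonal step. -/
def IsDyck (p : List MStep) : Prop := IsMotzkin p ∧ MStep.D ∉ p

/-- A path is primitive if it touches the diagonal only at its endpoints. -/
def IsPrimitive (p : List MStep) : Prop :=
  IsMotzkin p ∧ ∀ q, q <+: p → q ≠ [] → q ≠ p → 0 < wsum q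

/-- Covering relation for the Tamari-type order on Motzkin paths:
`Q` covers `P` iff `P = P₁·E·P₂·P₃` and `Q = P₁·P₂·E·P₃` with `P₂` a nonempty
primitive Motzkin path. -/
def MCover (P Q : List MStep) : Prop :=
  ∃ P₁ P₂ P₃ : List MStep, IsMotzkin P₂ ∧ IsPrimitive P₂ ∧
    P = P₁ ++ [MStep.E] ++ P₂ ++ P₃ ∧ Q = P₁ ++ P₂ ++ [MStep.E] ++ P₃

/-- Covering relation of the Tamari order on Dyck paths. -/
def DCover (P Q : List MStep) : Prop :=
  ∃ P₁ P₂ P₃ : List MStep, IsDyck P₂ ∧ IsPrimitive P₂ ∧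
    P = P₁ ++ [MStep.E] ++ P₂ ++ P₃ ∧ Q = P₁ ++ P₂ ++ [MStep.E] ++ P₃

/-- The partial order `≤_M` on Motzkin paths. -/
def MLE : List MStep → List MStep → Prop := Relation.ReflTransGen MCover

/-- The Tamari order `≤_D` on Dyck paths. -/
def DLE : List MStep → List MStep → Prop := Relation.ReflTransGen DCover

/-- Heights of the diagonal steps along a path, starting from height `h`. -/
def clsFrom : List MStep → ℤ → List ℤ
  | [], _ => []
  | .N :: rest, h => clsFrom rest (h + 1)
  | .E :: rest, h => clsFrom rest h
  | .D :: rest, h => (h + 1) :: clsFrom rest (h + 1)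

/-- The class of a Motzkin path: the sequence of heights (ending `y`-coordinates)
of its diagonal steps, in the order they occur. -/
def cls (p : List MStep) : List ℤ := clsFrom p 0

/-- A path avoids `NNN` if it has no three consecutive north steps. -/
def AvoidsNNN (p : List MStep) : Prop := ¬ ([MStep.N, MStep.N, MStep.N] <:+: p)

/-- Callan's bijection `φ`: replace each factor `NE` by `D` and each factor
`NNE` by `N`, leaving remaining east steps unchanged. -/
def phi : List MStep → List MStep
  | [] => []
  | .N :: .N :: .E :: rest => .N :: phi rest
  | .N :: .E :: rest => .D :: phi rest
  | s :: rest => s :: phi rest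

/-- The inverse of `φ`: replace each `D` by `NE` and each `N` by `NNE`. -/
def psi : List MStep → List MStep
  | [] => []
  | .N :: rest => .N :: .N :: .E :: psi rest
  | .D :: rest => .N :: .E :: psi rest
  | .E :: rest => .E :: psi rest

/-- For each north step of the path (in order), record `N` if it is immediately
followed by an east step and `E` otherwise. -/
def typeRaw : List MStep → List MStep
  | [] => []
  | .N :: rest => (if rest.head? = some MStep.E then MStep.N else MStep.E) :: typeRaw rest
  | _ :: rest => typeRaw rest

/-- The type of a Dyck path of length `2n`: the word of length `n - 1` whose
`i`-th letter is `N` iff the `i`-th north step is immediately followed by an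
east step (the letter of the last north step is dropped). -/
def typeW (p : List MStep) : List MStep := (typeRaw p).dropLast

/-- `ds p` is the number of north steps of `p` that are neither immediately
preceded nor immediately followed by another north step. -/
def ds (p : List MStep) : ℕ :=
  ((Finset.range p.length).filter (fun i =>
    p[i]? = some MStep.N ∧ p[i + 1]? ≠ some MStep.N ∧
      (i = 0 ∨ p[i - 1]? ≠ some MStep.N))).card

/-- The number of contacts of a path with the diagonal `y = x` (lattice points
of the path lying on the diagonal, endpoints included). -/
def cont (p : List MStep) : ℕ :=
  ((Finset.range (p.length + 1)).filter (fun i => wsum (p.take i) = 0)).card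


/-- Auxiliary: `ftoc t c` computes the class from a type word. -/
def ftoc : List MStep → ℤ → List ℤ
  | [], _ => []
  | .E :: .N :: t, c => ftoc t (c + 1)
  | .N :: t, c => (c + 1) :: ftoc t (c + 1)
  | _ :: t, c => ftoc t c

/-- Valid type words: every `E` is immediately followed by an `N`. -/
inductive ValidT : List MStep → Prop
  | nil : ValidT []
  | one {t} : ValidT t → ValidT (.N :: t)
  | two {t} : ValidT t → ValidT (.E :: .N :: t)

/-- Well-formedness invariant for the recursion of `phi`. -/
def Good (p : List MStep) : Prop :=
  MStep.D ∉ p ∧ AvoidsNNN p ∧ p.getLast? ≠ some MStep.N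

lemma good_tail {x : MStep} {rest : List MStep} (h : Good (x :: rest)) : Good rest := by
  obtain ⟨h1, h2, h3⟩ := h
  refine ⟨fun hm => h1 (List.mem_cons_of_mem _ hm), fun hinf => h2 (hinf.trans
    ((List.suffix_cons x rest).isInfix)), ?_⟩
  cases rest with
  | nil => simp
  | cons b t => rwa [List.getLast?_cons_cons] at h3

lemma wsum_append (a b : List MStep) : wsum (a ++ b) = wsum a + wsum b := by
  simp [wsum]

lemma key (p : List MStep) (hg : Good p) :
    ValidT (typeRaw p) ∧ ∀ h : ℤ, clsFrom (phi p) h = ftoc (typeRaw p) h := by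
  match p with
  | [] => exact ⟨ValidT.nil, fun h => by simp [phi, typeRaw, clsFrom, ftoc]⟩
  | .D :: rest => exact absurd (List.mem_cons_self) hg.1
  | .E :: rest =>
    obtain ⟨hv, hc⟩ := key rest (good_tail hg)
    refine ⟨by simpa [typeRaw] using hv, fun h => ?_⟩
    simp only [phi, typeRaw, clsFrom]
    exact hc h
  | [.N] => exact absurd rfl hg.2.2
  | .N :: .D :: rest => exact absurd (by simp) hg.1
  | .N :: .E :: rest =>
    obtain ⟨hv, hc⟩ := key rest (good_tail (good_tail hg))
    constructor
    · simp only [typeRaw, List.head?]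
      exact ValidT.one (by simpa [typeRaw] using hv)
    · intro h
      have htr : typeRaw (.N :: .E :: rest) = .N :: typeRaw rest := by simp [typeRaw]
      rw [htr, show phi (.N :: .E :: rest) = .D :: phi rest from rfl]
      rw [show ftoc (.N :: typeRaw rest) h = (h+1) :: ftoc (typeRaw rest) (h+1) from rfl]
      simp [clsFrom, hc (h+1)]
  | [.N, .N] => exact absurd rfl hg.2.2
  | .N :: .N :: .D :: rest => exact absurd (by simp) hg.1
  | .N :: .N :: .N :: rest =>
    exact absurd (List.IsPrefix.isInfix ⟨rest, rfl⟩) hg.2.1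
  | .N :: .N :: .E :: rest =>
    obtain ⟨hv, hc⟩ := key rest (good_tail (good_tail (good_tail hg)))
    have htr : typeRaw (.N :: .N :: .E :: rest) = .E :: .N :: typeRaw rest := by
      simp [typeRaw]
    constructor
    · rw [htr]; exact ValidT.two hv
    · intro h
      rw [htr, show phi (.N :: .N :: .E :: rest) = .N :: phi rest from rfl]
      rw [show ftoc (.E :: .N :: typeRaw rest) h = ftoc (typeRaw rest) (h+1) from rfl]
      simp [clsFrom, hc (h+1)]

lemma ftoc_mem {t : List MStep} (hv : ValidT t) :
    ∀ c : ℤ, ∀ x ∈ ftoc t c, c < x := by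
  induction hv with
  | nil => intro c x hx; simp [ftoc] at hx
  | one hv ih =>
    intro c x hx
    rw [show ftoc (.N :: _) c = (c+1) :: ftoc _ (c+1) from rfl] at hx
    rcases List.mem_cons.1 hx with h | h
    · omega
    · have := ih (c+1) x h; omega
  | two hv ih =>
    intro c x hx
    rw [show ftoc (.E :: .N :: _) c = ftoc _ (c+1) from rfl] at hx
    have := ih (c+1) x hx; omega

lemma ftoc_inj {t : List MStep} (hv : ValidT t) :
    ∀ t' : List MStep, ValidT t' → t.length = t'.length →
      ∀ c : ℤ, ftoc t c = ftoc t' c → t = t' := by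
  induction hv with
  | nil =>
    intro t' hv' hlen c _
    cases hv' with
    | nil => rfl
    | one => simp at hlen
    | two => simp at hlen
  | @one t1 hv ih =>
    intro t' hv' hlen c heq
    cases hv' with
    | nil => simp at hlen
    | @one t1' hv1 =>
      rw [show ftoc (.N :: t1) c = (c+1) :: ftoc t1 (c+1) from rfl,
        show ftoc (.N :: t1') c = (c+1) :: ftoc t1' (c+1) from rfl] at heq
      have := ih t1' hv1 (by simpa using hlen) (c+1) (List.cons.injEq .. ▸ heq |>.2 )
      rw [this]
    | @two t1' hv1 =>
      rw [show ftoc (.N :: t1) c = (c+1) :: ftoc t1 (c+1) from rfl,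
        show ftoc (.E :: .N :: t1') c = ftoc t1' (c+1) from rfl] at heq
      have hmem : (c+1) ∈ ftoc t1' (c+1) := heq ▸ List.mem_cons_self
      have := ftoc_mem hv1 (c+1) _ hmem
      omega
  | @two t1 hv ih =>
    intro t' hv' hlen c heq
    cases hv' with
    | nil => simp at hlen
    | @one t1' hv1 =>
      rw [show ftoc (.E :: .N :: t1) c = ftoc t1 (c+1) from rfl,
        show ftoc (.N :: t1') c = (c+1) :: ftoc t1' (c+1) from rfl] at heq
      have hmem : (c+1) ∈ ftoc t1 (c+1) := heq ▸ List.mem_cons_self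
      have := ftoc_mem hv (c+1) _ hmem
      omega
    | @two t1' hv1 =>
      rw [show ftoc (.E :: .N :: t1) c = ftoc t1 (c+1) from rfl,
        show ftoc (.E :: .N :: t1') c = ftoc t1' (c+1) from rfl] at heq
      have := ih t1' hv1 (by simpa using hlen) (c+1) heq
      rw [this]

lemma validT_getLast {t : List MStep} (hv : ValidT t) (hne : t ≠ []) :
    t.getLast? = some MStep.N := by
  induction hv with
  | nil => exact absurd rfl hne
  | @one t1 hv ih =>
    cases t1 with
    | nil => rfl
    | cons b l => rw [List.getLast?_cons_cons]; exact ih (by simp)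
  | @two t1 hv ih =>
    rw [List.getLast?_cons_cons]
    cases t1 with
    | nil => rfl
    | cons b l => rw [List.getLast?_cons_cons]; exact ih (by simp)

lemma wsum_count (p : List MStep) :
    wsum p = (p.count MStep.N : ℤ) - (p.count MStep.E : ℤ) := by
  induction p with
  | nil => simp [wsum]
  | cons a l ih =>
    have : wsum (a :: l) = a.hdiff + wsum l := by simp [wsum]
    rw [this, ih]
    cases a <;> simp [MStep.hdiff, List.count_cons] <;> omega

lemma length_typeRaw (p : List MStep) : (typeRaw p).length = p.count MStep.N := by
  induction p with
  | nil => simp [typeRaw]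
  | cons a l ih =>
    cases a <;> simp [typeRaw, List.count_cons, ih]

lemma good_of_dyck {p : List MStep} (hd : IsDyck p) (ha : AvoidsNNN p) : Good p := by
  refine ⟨hd.2, ha, fun hlast => ?_⟩
  obtain ⟨q, hq⟩ := List.getLast?_eq_some_iff.1 hlast
  have h0 : wsum p = 0 := hd.1.2.2
  have hpre : (0:ℤ) ≤ wsum q := hd.1.2.1 q ⟨[MStep.N], hq.symm⟩
  rw [hq, wsum_append] at h0
  have h1 : wsum [MStep.N] = 1 := by simp [wsum, MStep.hdiff]
  omega

lemma count_N_of_dyck {p : List MStep} (hd : IsDyck p) {n : ℕ} (hlen : p.length = 2 * n) :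
    p.count MStep.N = n := by
  have h0 : wsum p = 0 := hd.1.2.2
  rw [wsum_count] at h0
  have hD : p.count MStep.D = 0 := List.count_eq_zero_of_not_mem hd.2
  have hsum : p.count MStep.N + p.count MStep.E + p.count MStep.D = p.length := by
    have := List.length_eq_countP_add_countP (· = MStep.N) (l := p)
    -- fall back to a direct induction
    clear this h0 hD hlen hd
    induction p with
    | nil => simp
    | cons a l ih => cases a <;> simp [List.count_cons, ih] <;> omega
  omega

lemma typeRaw_eq_typeW {p : List MStep} (hv : ValidT (typeRaw p)) (hne : typeRaw p ≠ []) :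
    typeRaw p = typeW p ++ [MStep.N] := by
  have hlast := validT_getLast hv hne
  have := List.dropLast_append_getLast hne
  rw [List.getLast?_eq_getLast hne, Option.some_inj] at hlast
  rw [typeW]
  conv_lhs => rw [← this, hlast]

/-- For Dyck paths `R, S` of the same length `2n` avoiding
`NNN`, one has `Type(R) = Type(S)` iff `cls (φ R) = cls (φ S)`. -/
theorem type_eq_iff_cls_eq (n : ℕ) (R S : List MStep)
    (hR : IsDyck R) (hS : IsDyck S)
    (hRn : R.length = 2 * n) (hSn : S.length = 2 * n)
    (hRa : AvoidsNNN R) (hSa : AvoidsNNN S) :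
    typeW R = typeW S ↔ cls (phi R) = cls (phi S) := by
  have hn : n ≠ 0 := by
    intro h; subst h; simp at hRn; exact hR.1.1 hRn
  obtain ⟨hvR, hcR⟩ := key R (good_of_dyck hR hRa)
  obtain ⟨hvS, hcS⟩ := key S (good_of_dyck hS hSa)
  have hlR : (typeRaw R).length = n := by
    rw [length_typeRaw, count_N_of_dyck hR hRn]
  have hlS : (typeRaw S).length = n := by
    rw [length_typeRaw, count_N_of_dyck hS hSn]
  have hneR : typeRaw R ≠ [] := by
    intro h; rw [h] at hlR; simp at hlR; exact hn hlR.symm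
  have hneS : typeRaw S ≠ [] := by
    intro h; rw [h] at hlS; simp at hlS; exact hn hlS.symm
  constructor
  · intro hT
    have htr : typeRaw R = typeRaw S := by
      rw [typeRaw_eq_typeW hvR hneR, typeRaw_eq_typeW hvS hneS, hT]
    show clsFrom (phi R) 0 = clsFrom (phi S) 0
    rw [hcR 0, hcS 0, htr]
  · intro hc
    have hf : ftoc (typeRaw R) 0 = ftoc (typeRaw S) 0 := by
      rw [← hcR 0, ← hcS 0]; exact hc
    have htr : typeRaw R = typeRaw S :=
      ftoc_inj hvR (typeRaw S) hvS (by rw [hlR, hlS]) 0 hf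
    rw [typeW, typeW, htr]
end

section
/- Let R be a Dyck path avoiding three consecutive north steps NNN, and let P = φ(R) be the corresponding Motzkin path. Then R is primitive if and only if P is primitive. -/
lemma wsum_nil : wsum ([] : List MStep) = 0 := rfl

lemma wsum_cons (s : MStep) (t : List MStep) : wsum (s :: t) = s.hdiff + wsum t := by
  simp [wsum]

lemma phi_ne_nil {p : List MStep} (h : p ≠ []) : phi p ≠ [] := by
  induction p using phi.induct with
  | case1 => simp at h
  | case2 rest ih => simp [phi]
  | case3 rest ih => simp [phi]
  | case4 s rest h1 h2 ih => rw [phi.eq_4 s rest h1 h2]; simp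

lemma phi_nil_iff {p : List MStep} : phi p = [] ↔ p = [] := by
  constructor
  · intro h; by_contra h0; exact phi_ne_nil h0 h
  · rintro rfl; rfl

lemma wsum_phi (p : List MStep) : wsum (phi p) = wsum p := by
  induction p using phi.induct with
  | case1 => rfl
  | case2 rest ih => simp [phi, wsum_cons, ih, MStep.hdiff]
  | case3 rest ih => simp [phi, wsum_cons, ih, MStep.hdiff]
  | case4 s rest h1 h2 ih => rw [phi.eq_4 s rest h1 h2, wsum_cons, wsum_cons, ih]

lemma lemC : ∀ (p q : List MStep), q <+: phi p → q ≠ [] → q ≠ phi p →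
    ∃ r, r <+: p ∧ r ≠ [] ∧ r ≠ p ∧ wsum r = wsum q := by
  intro p
  induction p using phi.induct with
  | case1 =>
    intro q hq hne _
    simp only [phi, List.prefix_nil] at hq
    exact absurd hq hne
  | case2 rest ih =>
    intro q hq hne hnep
    rw [show phi (.N :: .N :: .E :: rest) = .N :: phi rest from rfl] at hq hnep
    rcases List.prefix_cons_iff.1 hq with rfl | ⟨t, rfl, ht⟩
    · exact absurd rfl hne
    by_cases ht0 : t = []
    · subst ht0
      have hrest : rest ≠ [] := by
        intro h; subst h; exact hnep rfl
      refine ⟨[.N, .N, .E], ⟨rest, rfl⟩, by simp, by simp [hrest], by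
        simp [wsum, MStep.hdiff]⟩
    · have htp : t ≠ phi rest := by
        intro h; subst h; exact hnep rfl
      obtain ⟨r', hr', hr'0, hr'ne, hw⟩ := ih t ht ht0 htp
      refine ⟨.N :: .N :: .E :: r', by simpa [List.cons_prefix_cons] using hr',
        by simp, by simp [hr'ne], by simp only [wsum_cons, MStep.hdiff, hw]; omega⟩
  | case3 rest ih =>
    intro q hq hne hnep
    rw [show phi (.N :: .E :: rest) = .D :: phi rest from rfl] at hq hnep
    rcases List.prefix_cons_iff.1 hq with rfl | ⟨t, rfl, ht⟩
    · exact absurd rfl hne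
    by_cases ht0 : t = []
    · subst ht0
      have hrest : rest ≠ [] := by
        intro h; subst h; exact hnep rfl
      refine ⟨[.N, .E], ⟨rest, rfl⟩, by simp, by simp [hrest], by
        simp [wsum, MStep.hdiff]⟩
    · have htp : t ≠ phi rest := by
        intro h; subst h; exact hnep rfl
      obtain ⟨r', hr', hr'0, hr'ne, hw⟩ := ih t ht ht0 htp
      refine ⟨.N :: .E :: r', by simpa [List.cons_prefix_cons] using hr',
        by simp, by simp [hr'ne], by simp only [wsum_cons, MStep.hdiff, hw]; omega⟩
  | case4 s rest h1 h2 ih =>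
    intro q hq hne hnep
    rw [phi.eq_4 s rest h1 h2] at hq hnep
    rcases List.prefix_cons_iff.1 hq with rfl | ⟨t, rfl, ht⟩
    · exact absurd rfl hne
    by_cases ht0 : t = []
    · subst ht0
      have hrest : rest ≠ [] := by
        intro h; subst h; exact hnep rfl
      refine ⟨[s], ⟨rest, rfl⟩, by simp, by simp [hrest], rfl⟩
    · have htp : t ≠ phi rest := by
        intro h; subst h; exact hnep rfl
      obtain ⟨r', hr', hr'0, hr'ne, hw⟩ := ih t ht ht0 htp
      refine ⟨s :: r', by simpa [List.cons_prefix_cons] using hr',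
        by simp, by simp [hr'ne], by simp only [wsum_cons, hw]⟩

lemma lemB : ∀ (p r : List MStep), r <+: p → r ≠ [] → r ≠ p →
    0 < wsum r ∨ ∃ q, q <+: phi p ∧ q ≠ [] ∧ q ≠ phi p ∧ wsum q ≤ wsum r := by
  intro p
  induction p using phi.induct with
  | case1 =>
    intro r hr hne _
    simp only [List.prefix_nil] at hr
    exact absurd hr hne
  | case2 rest ih =>
    intro r hr hne hnep
    rw [show phi (.N :: .N :: .E :: rest) = .N :: phi rest from rfl]
    rcases List.prefix_cons_iff.1 hr with rfl | ⟨t, rfl, ht⟩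
    · exact absurd rfl hne
    rcases List.prefix_cons_iff.1 ht with rfl | ⟨u, rfl, hu⟩
    · left; simp [wsum, MStep.hdiff]
    rcases List.prefix_cons_iff.1 hu with rfl | ⟨r', rfl, hr'⟩
    · left; simp [wsum, MStep.hdiff]
    by_cases hr'0 : r' = []
    · left; subst hr'0; simp [wsum, MStep.hdiff]
    have hrest : rest ≠ [] := by
      intro h; subst h; simp [List.prefix_nil] at hr'; exact hr'0 hr'
    have hr'ne : r' ≠ rest := by
      intro h; subst h; exact hnep rfl
    have hphirest : phi rest ≠ [] := phi_ne_nil hrest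
    rcases ih r' hr' hr'0 hr'ne with h | ⟨q', hq', hq'0, hq'1, hw⟩
    · right
      refine ⟨[.N], ⟨phi rest, rfl⟩, by simp, by simp [hphirest], ?_⟩
      simp only [wsum_cons, wsum_nil, MStep.hdiff]
      omega
    · right
      refine ⟨.N :: q', by simpa [List.cons_prefix_cons] using hq',
        by simp, by simp [hq'1], ?_⟩
      simp only [wsum_cons, wsum_nil, MStep.hdiff]
      omega
  | case3 rest ih =>
    intro r hr hne hnep
    rw [show phi (.N :: .E :: rest) = .D :: phi rest from rfl]
    rcases List.prefix_cons_iff.1 hr with rfl | ⟨t, rfl, ht⟩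
    · exact absurd rfl hne
    rcases List.prefix_cons_iff.1 ht with rfl | ⟨r', rfl, hr'⟩
    · left; simp [wsum, MStep.hdiff]
    by_cases hr'0 : r' = []
    · subst hr'0
      have hrest : rest ≠ [] := by
        intro h; subst h; exact hnep rfl
      right
      refine ⟨[.D], ⟨phi rest, rfl⟩, by simp, by simp [phi_ne_nil hrest], ?_⟩
      simp [wsum, MStep.hdiff]
    have hrest : rest ≠ [] := by
      intro h; subst h; simp [List.prefix_nil] at hr'; exact hr'0 hr'
    have hr'ne : r' ≠ rest := by
      intro h; subst h; exact hnep rfl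
    rcases ih r' hr' hr'0 hr'ne with h | ⟨q', hq', hq'0, hq'1, hw⟩
    · right
      refine ⟨[.D], ⟨phi rest, rfl⟩, by simp, by simp [phi_ne_nil hrest], ?_⟩
      simp only [wsum_cons, wsum_nil, MStep.hdiff]
      omega
    · right
      refine ⟨.D :: q', by simpa [List.cons_prefix_cons] using hq',
        by simp, by simp [hq'1], ?_⟩
      simp only [wsum_cons, wsum_nil, MStep.hdiff]
      omega
  | case4 s rest h1 h2 ih =>
    intro r hr hne hnep
    rw [phi.eq_4 s rest h1 h2]
    rcases List.prefix_cons_iff.1 hr with rfl | ⟨r', rfl, hr'⟩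
    · exact absurd rfl hne
    by_cases hr'0 : r' = []
    · subst hr'0
      have hrest : rest ≠ [] := by
        intro h; subst h; exact hnep rfl
      right
      exact ⟨[s], ⟨phi rest, rfl⟩, by simp, by simp [phi_ne_nil hrest], le_refl _⟩
    have hrest : rest ≠ [] := by
      intro h; subst h; simp [List.prefix_nil] at hr'; exact hr'0 hr'
    have hr'ne : r' ≠ rest := by
      intro h; subst h; exact hnep rfl
    rcases ih r' hr' hr'0 hr'ne with h | ⟨q', hq', hq'0, hq'1, hw⟩
    · right
      refine ⟨[s], ⟨phi rest, rfl⟩, by simp, by simp [phi_ne_nil hrest], ?_⟩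
      simp only [wsum_cons, wsum_nil]
      omega
    · right
      refine ⟨s :: q', by simpa [List.cons_prefix_cons] using hq',
        by simp, by simp [hq'1], ?_⟩
      simp only [wsum_cons, wsum_nil]
      omega

/-- A Dyck path `R` avoiding `NNN` is primitive iff the
Motzkin path `φ R` is primitive. -/
theorem phi_primitive (R : List MStep) (hR : IsDyck R) (hRa : AvoidsNNN R) :
    IsPrimitive R ↔ IsPrimitive (phi R) := by
  constructor
  · rintro ⟨hM, hP⟩
    refine ⟨⟨phi_ne_nil hM.1, ?_, by rw [wsum_phi]; exact hM.2.2⟩, ?_⟩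
    · intro q hq
      by_cases h0 : q = []
      · subst h0; simp [wsum]
      by_cases h1 : q = phi R
      · subst h1; rw [wsum_phi, hM.2.2]
      · obtain ⟨r, hr, hr0, hrp, hw⟩ := lemC R q hq h0 h1
        rw [← hw]; exact le_of_lt (hP r hr hr0 hrp)
    · intro q hq h0 h1
      obtain ⟨r, hr, hr0, hrp, hw⟩ := lemC R q hq h0 h1
      rw [← hw]; exact hP r hr hr0 hrp
  · rintro ⟨hM, hP⟩
    refine ⟨hR.1, ?_⟩
    intro r hr h0 h1
    rcases lemB R r hr h0 h1 with h | ⟨q, hq, hq0, hq1, hw⟩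
    · exact h
    · exact lt_of_lt_of_le (hP q hq hq0 hq1) hw
end
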